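/- Let k ≥ 1 and let β, μ_1,…,μ_k, α_1,…,α_k, f_1,…,f_k > 0. Define on the open set {y : 0 < y_i < f_i for all i} the functions h_i(y) = ln( (y_i/α_i) / ( β μ_i (f_i - y_i) Σ_j y_j ) ). Then ∂h_i/∂y_j = ∂h_j/∂y_i for all i, j on this set. -/

import Mathlib

theorem irrotational_SIS (k : ℕ) (hk : 1 ≤ k)
    (β : ℝ) (mu alpha f : Fin k → ℝ)
    (hβ : 0 < β) (hmu : ∀ i, 0 < mu i) (halpha : ∀ i, 0 < alpha i)
    (hf : ∀ i, 0 < f i)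
    (h : Fin k → (Fin k → ℝ) → ℝ)
    (hdef : ∀ i y, h i y =
      Real.log ((y i / alpha i) / (β * mu i * (f i - y i) * ∑ j, y j))) :
    ∀ (y : Fin k → ℝ), (∀ i, 0 < y i ∧ y i < f i) → ∀ i j,
      deriv (fun t => h i (Function.update y j t)) (y j) =
        deriv (fun t => h j (Function.update y i t)) (y i) := by
  intro y hy i j
  have : NeZero k := ⟨by omega⟩
  have hS : 0 < ∑ l, y l :=
    Finset.sum_pos (fun l _ => (hy l).1) Finset.univ_nonempty
  -- key computation: for i ≠ j the partial derivative is -(1 / S)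
  have key : ∀ i j : Fin k, i ≠ j →
      deriv (fun t => h i (Function.update y j t)) (y j) = -(1 / ∑ l, y l) := by
    intro i j hij
    set S := ∑ l, y l with hSdef
    set c := S - y j with hc
    have hsum : ∀ t : ℝ, (∑ l, Function.update y j t l) = t + c := by
      intro t
      rw [Finset.sum_update_of_mem (Finset.mem_univ j)]
      have : ∑ l ∈ Finset.univ \ {j}, y l = S - y j := by
        rw [Finset.sum_sdiff_eq_sub (Finset.singleton_subset_iff.mpr (Finset.mem_univ j))]
        simp [hSdef]
      rw [this, hc]
    have hyc : 0 < y j + c := by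
      rw [hc]; linarith
    have hA : 0 < y i / alpha i := div_pos (hy i).1 (halpha i)
    have hB : 0 < β * mu i * (f i - y i) :=
      mul_pos (mul_pos hβ (hmu i)) (sub_pos.mpr (hy i).2)
    -- eventual equality with a nicer function
    have hopen : ∀ᶠ t in nhds (y j), 0 < t + c := by
      have hco : ContinuousAt (fun t : ℝ => t + c) (y j) := by fun_prop
      exact hco.eventually (eventually_gt_nhds hyc)
    have heq : (fun t => h i (Function.update y j t)) =ᶠ[nhds (y j)]
        fun t => Real.log (y i / alpha i) - Real.log (β * mu i * (f i - y i))
          - Real.log (t + c) := by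
      filter_upwards [hopen] with t ht
      rw [hdef, hsum, Function.update_of_ne hij, Real.log_div hA.ne'
        (mul_ne_zero hB.ne' ht.ne'), Real.log_mul hB.ne' ht.ne']
      ring
    rw [heq.deriv_eq]
    have hder : HasDerivAt (fun t : ℝ =>
        Real.log (y i / alpha i) - Real.log (β * mu i * (f i - y i))
          - Real.log (t + c)) (-(1 / (y j + c))) (y j) := by
      have h1 : HasDerivAt (fun t : ℝ => t + c) 1 (y j) :=
        (hasDerivAt_id _).add_const c
      have h2 := (h1.log hyc.ne')
      have h3 := ((hasDerivAt_const (y j) (Real.log (y i / alpha i)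
        - Real.log (β * mu i * (f i - y i)))).sub h2)
      simpa [sub_sub, Pi.sub_def] using h3
    rw [hder.deriv]
    have : y j + c = S := by rw [hc]; ring
    rw [this]
  by_cases hij : i = j
  · subst hij; rfl
  · rw [key i j hij, key j i (Ne.symm hij)]
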